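/- If R₁, R₂ ⊆ Ω are disjoint measurable sets with P₀(R₁) = P₀(R₂) = Δ and 0 < Δ < 1/2, then the covariance of the likelihood ratios is bounded: |∫_{Ωⁿ} F_{R₁}·F_{R₂} dP₀ⁿ − 1| ≤ n·Δ²/((1−Δ)·√(1−2Δ)). -/

import Mathlib

open MeasureTheory

lemma pi_integral_indicator_pow {Ω : Type*} [MeasurableSpace Ω]
    (P₀ : Measure Ω) [IsProbabilityMeasure P₀] (n : ℕ)
    (S : Set Ω) (hS : MeasurableSet S) :
    (∫ x : Fin n → Ω, ∏ i, S.indicator (fun _ => (1:ℝ)) (x i)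
      ∂(Measure.pi fun _ : Fin n => P₀)) = ((P₀ S).toReal)^n := by
  letI : MeasureSpace Ω := ⟨P₀⟩
  have h : (Measure.pi fun _ : Fin n => P₀) = (volume : Measure (Fin n → Ω)) := rfl
  rw [integral_fintype_prod_eq_pow (S.indicator (fun _ => (1:ℝ)))]
  congr 1
  · have : (∫ x, S.indicator (fun _ => (1:ℝ)) x ∂(volume : Measure Ω))
        = (volume S).toReal := by
      simpa [Pi.one_def, Measure.real] using integral_indicator_one (μ := (volume : Measure Ω)) hS
    exact this
  · simp

theorem likelihood_ratio_cov_bound {Ω : Type*} [MeasurableSpace Ω]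
    (P₀ : Measure Ω) [IsProbabilityMeasure P₀]
    (n : ℕ) (hn : 1 ≤ n)
    (R₁ R₂ : Set Ω) (hR₁ : MeasurableSet R₁) (hR₂ : MeasurableSet R₂)
    (hdisj : Disjoint R₁ R₂)
    (Δ : ℝ) (hΔ0 : 0 < Δ) (hΔ1 : Δ < 1/2)
    (hPR₁ : P₀ R₁ = ENNReal.ofReal Δ) (hPR₂ : P₀ R₂ = ENNReal.ofReal Δ)
    (F₁ F₂ : (Fin n → Ω) → ℝ)
    (hF₁ : ∀ x, F₁ x = ((1 - Δ)^n)⁻¹ * ∏ i, Set.indicator R₁ᶜ (fun _ => (1:ℝ)) (x i))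
    (hF₂ : ∀ x, F₂ x = ((1 - Δ)^n)⁻¹ * ∏ i, Set.indicator R₂ᶜ (fun _ => (1:ℝ)) (x i)) :
    |(∫ x, F₁ x * F₂ x ∂(Measure.pi fun _ : Fin n => P₀)) - 1|
      ≤ n * Δ^2 / ((1 - Δ) * Real.sqrt (1 - 2*Δ)) := by
  have hΔ1' : Δ < 1 := by linarith
  have h2Δ : (0:ℝ) < 1 - 2*Δ := by linarith
  have h1Δ : (0:ℝ) < 1 - Δ := by linarith
  have hunion : P₀ (R₁ ∪ R₂) = ENNReal.ofReal (2*Δ) := by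
    rw [measure_union hdisj hR₂, hPR₁, hPR₂, ← ENNReal.ofReal_add hΔ0.le hΔ0.le]
    ring_nf
  have hcompl : P₀ (R₁ ∪ R₂)ᶜ = ENNReal.ofReal (1 - 2*Δ) := by
    rw [measure_compl (hR₁.union hR₂) (measure_ne_top _ _), hunion, measure_univ,
      ← ENNReal.ofReal_one, ← ENNReal.ofReal_sub _ (by linarith : (0:ℝ) ≤ 2*Δ)]
  -- pointwise rewrite
  have hpt : ∀ x : Fin n → Ω, F₁ x * F₂ x
      = (((1 - Δ)^n)⁻¹ * ((1 - Δ)^n)⁻¹) *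
        ∏ i, Set.indicator (R₁ ∪ R₂)ᶜ (fun _ => (1:ℝ)) (x i) := by
    intro x
    rw [hF₁, hF₂]
    have : (∏ i, Set.indicator R₁ᶜ (fun _ => (1:ℝ)) (x i)) *
        (∏ i, Set.indicator R₂ᶜ (fun _ => (1:ℝ)) (x i))
        = ∏ i, Set.indicator (R₁ ∪ R₂)ᶜ (fun _ => (1:ℝ)) (x i) := by
      rw [← Finset.prod_mul_distrib]
      refine Finset.prod_congr rfl fun i _ => ?_
      by_cases h1 : x i ∈ R₁ <;> by_cases h2 : x i ∈ R₂ <;>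
        simp [Set.indicator, h1, h2]
    rw [mul_mul_mul_comm, this]
  have hint : (∫ x, F₁ x * F₂ x ∂(Measure.pi fun _ : Fin n => P₀))
      = ((1 - 2*Δ)/(1-Δ)^2)^n := by
    simp_rw [hpt]
    rw [integral_const_mul, pi_integral_indicator_pow _ _ _ (hR₁.union hR₂).compl, hcompl,
      ENNReal.toReal_ofReal h2Δ.le, div_pow,
      show ((1-Δ)^2)^n = ((1-Δ)^n)^2 by rw [← pow_mul, ← pow_mul, Nat.mul_comm]]
    have hne : ((1:ℝ)-Δ)^n ≠ 0 := pow_ne_zero _ (by linarith)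
    field_simp
  rw [hint]
  set r : ℝ := (1 - 2*Δ)/(1-Δ)^2 with hr
  have hr0 : 0 < r := div_pos h2Δ (by positivity)
  have hsub : 1 - r = Δ^2/(1-Δ)^2 := by
    rw [hr]; field_simp; ring
  have hr1 : r ≤ 1 := by
    have : (0:ℝ) ≤ Δ^2/(1-Δ)^2 := by positivity
    linarith
  have hrn1 : r^n ≤ 1 := pow_le_one₀ hr0.le hr1
  have habs : |r^n - 1| = 1 - r^n := by
    rw [abs_sub_comm, abs_of_nonneg (by linarith)]
  rw [habs]
  have hbern : 1 + (n:ℝ) * (r - 1) ≤ r^n := by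
    have := one_add_mul_le_pow (a := r - 1) (by linarith) n
    simpa using this
  have h1 : 1 - r^n ≤ n * (Δ^2/(1-Δ)^2) := by
    have : (n:ℝ) * (1 - r) = n * (Δ^2/(1-Δ)^2) := by rw [hsub]
    nlinarith
  refine h1.trans ?_
  have hsqrt : Real.sqrt (1 - 2*Δ) ≤ 1 - Δ := by
    rw [show (1:ℝ) - Δ = Real.sqrt ((1-Δ)^2) by rw [Real.sqrt_sq h1Δ.le]]
    exact Real.sqrt_le_sqrt (by nlinarith)
  have hden : 0 < (1-Δ) * Real.sqrt (1 - 2*Δ) := by positivity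
  have hle : (1-Δ) * Real.sqrt (1 - 2*Δ) ≤ (1-Δ)^2 := by
    calc (1-Δ) * Real.sqrt (1 - 2*Δ) ≤ (1-Δ) * (1-Δ) :=
          mul_le_mul_of_nonneg_left hsqrt h1Δ.le
      _ = (1-Δ)^2 := by ring
  have h2 : Δ^2/((1-Δ)^2) ≤ Δ^2/((1-Δ)*Real.sqrt (1-2*Δ)) :=
    div_le_div_of_nonneg_left (by positivity) hden hle
  calc (n:ℝ) * (Δ^2/(1-Δ)^2) ≤ (n:ℝ) * (Δ^2/((1-Δ)*Real.sqrt (1-2*Δ))) :=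
        mul_le_mul_of_nonneg_left h2 (Nat.cast_nonneg n)
    _ = (n:ℝ) * Δ^2 / ((1-Δ)*Real.sqrt (1-2*Δ)) := by ring
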